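/- Suppose h : ℝ → [0,∞) is polynomially bounded, μ bounded with μ ≥ μ̲ > 0, σ bounded with σ̲ ≤ σ ≤ σ̄. Define Λ₂(z) := ((h(z) − α⋆)/μ(z))·∫_{z₀−z}^∞ (2μ(y+z)/σ(y+z)²)·exp(−∫_z^{y+z} 2μ/σ²) dy for z < z₀. Then lim_{z→−∞} Λ₂(z) = 0. -/

import Mathlib

open Filter Set MeasureTheory intervalIntegral

lemma aux_integral_exp (a : ℝ) {c : ℝ} (hc : 0 < c) :
    ∫ y in Set.Ioi a, Real.exp (-(c * y)) = Real.exp (-(c * a)) / c := by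
  have h := MeasureTheory.integral_comp_mul_left_Ioi (fun x => Real.exp (-x)) a hc
  simp only [smul_eq_mul] at h
  rw [h, integral_exp_neg_Ioi]
  field_simp

lemma aux_pow_exp (n : ℕ) {c : ℝ} (hc : 0 < c) :
    Tendsto (fun s : ℝ => s ^ n * Real.exp (-(c * s))) atTop (nhds 0) := by
  have h := tendsto_rpow_mul_exp_neg_mul_atTop_nhds_zero (n : ℝ) c hc
  refine h.congr' ?_
  filter_upwards [eventually_ge_atTop (0 : ℝ)] with x hx
  rw [Real.rpow_natCast, neg_mul]

/-- The term `Λ₂(z)` tends to `0` as `z → −∞`. -/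
theorem lambda2_vanishes
    (μ σ : ℝ → ℝ) (hμc : Continuous μ) (hσc : Continuous σ)
    (μlo μhi σlo σhi : ℝ)
    (hμlo : 0 < μlo) (hμ : ∀ z, μlo ≤ μ z ∧ μ z ≤ μhi)
    (hσlo : 0 < σlo) (hσ : ∀ z, σlo ≤ σ z ∧ σ z ≤ σhi)
    (h : ℝ → ℝ) (hhnn : ∀ z, 0 ≤ h z)
    (hpoly : ∃ b₁ b₂ : ℝ, ∃ n : ℕ, ∀ z, |h z| ≤ b₁ + b₂ * |z| ^ n)
    (αstar : ℝ) (z₀ : ℝ) :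
    Tendsto (fun z : ℝ =>
        ((h z - αstar) / μ z) *
          ∫ y in Set.Ioi (z₀ - z),
            (2 * μ (y + z) / (σ (y + z)) ^ 2) *
              Real.exp (-(∫ u in z..(y + z), 2 * μ u / (σ u) ^ 2)))
      atBot (nhds 0) := by
  obtain ⟨b₁, b₂, n, hb⟩ := hpoly
  have hσhi : 0 < σhi := hσlo.trans_le ((hσ 0).1.trans (hσ 0).2)
  set f : ℝ → ℝ := fun u => 2 * μ u / σ u ^ 2 with hfdef
  have hσpos : ∀ u, 0 < σ u := fun u => hσlo.trans_le (hσ u).1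
  have hfc : Continuous f :=
    (continuous_const.mul hμc).div (hσc.pow 2)
      (fun u => (pow_pos (hσpos u) 2).ne')
  set c : ℝ := 2 * μlo / σhi ^ 2 with hcdef
  set C : ℝ := 2 * μhi / σlo ^ 2 with hCdef
  have hc : 0 < c := div_pos (by linarith) (pow_pos hσhi 2)
  have hC : 0 < C := div_pos (by linarith [hμlo.trans_le ((hμ 0).1.trans (hμ 0).2)])
    (pow_pos hσlo 2)
  have hflb : ∀ u, c ≤ f u := by
    intro u
    exact div_le_div₀ (by linarith [(hμ u).1]) (by linarith [(hμ u).1])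
      (pow_pos (hσpos u) 2)
      (pow_le_pow_left₀ (hσpos u).le (hσ u).2 2)
  have hfub : ∀ u, f u ≤ C := by
    intro u
    exact div_le_div₀ (by linarith [(hμ u).2, (hμ u).1]) (by linarith [(hμ u).2])
      (pow_pos hσlo 2)
      (pow_le_pow_left₀ hσlo.le (hσ u).1 2)
  -- the bound function
  set B : ℝ → ℝ := fun z =>
    ((b₁ + |αstar| + |b₂| * ((z₀ - z) + |z₀|) ^ n) / μlo) *
      (C / c * Real.exp (-(c * (z₀ - z)))) with hBdef
  -- B tends to 0
  have hBlim : Tendsto B atBot (nhds 0) := by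
    have hG : Tendsto (fun t : ℝ =>
        ((b₁ + |αstar| + |b₂| * (t + |z₀|) ^ n) / μlo) *
          (C / c * Real.exp (-(c * t)))) atTop (nhds 0) := by
      have h1 : Tendsto (fun t : ℝ => Real.exp (-(c * t))) atTop (nhds 0) := by
        refine Real.tendsto_exp_atBot.comp ?_
        exact tendsto_neg_atBot_iff.mpr (tendsto_id.const_mul_atTop hc)
      have h2 : Tendsto (fun t : ℝ => (t + |z₀|) ^ n * Real.exp (-(c * t)))
          atTop (nhds 0) := by
        have hcomp := (aux_pow_exp n hc).comp
          (tendsto_atTop_add_const_right atTop |z₀| tendsto_id)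
        have := hcomp.mul_const (Real.exp (c * |z₀|))
        rw [zero_mul] at this
        refine this.congr fun t => ?_
        simp only [Function.comp_apply, id_eq]
        rw [mul_assoc, ← Real.exp_add]
        ring_nf
      have hsum := (h1.const_mul ((b₁ + |αstar|) / μlo * (C / c))).add
        (h2.const_mul (|b₂| / μlo * (C / c)))
      simp only [mul_zero, add_zero] at hsum
      refine hsum.congr fun t => ?_
      ring
    have hcomp : Tendsto (fun z : ℝ => z₀ - z) atBot atTop := by
      have := tendsto_atTop_add_const_left atBot z₀ tendsto_neg_atBot_atTop
      refine this.congr fun z => ?_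
      ring
    exact hG.comp hcomp
  -- squeeze
  refine squeeze_zero_norm' ?_ hBlim
  filter_upwards [eventually_lt_atBot z₀] with z hz
  set a : ℝ := z₀ - z with hadef
  have ha : 0 < a := by simp [hadef]; linarith
  set g : ℝ → ℝ := fun y =>
    (2 * μ (y + z) / (σ (y + z)) ^ 2) *
      Real.exp (-(∫ u in z..(y + z), 2 * μ u / (σ u) ^ 2)) with hgdef
  have hgnn : ∀ y, 0 ≤ g y := fun y =>
    mul_nonneg (div_nonneg (by linarith [(hμ (y + z)).1]) (sq_nonneg _))
      (Real.exp_pos _).le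
  have hgub : ∀ y ∈ Set.Ioi a, g y ≤ C * Real.exp (-(c * y)) := by
    intro y hy
    have h0y : (0 : ℝ) ≤ y := le_of_lt (ha.trans hy)
    have hinner : c * y ≤ ∫ u in z..(y + z), f u := by
      have hmono := intervalIntegral.integral_mono_on (a := z) (b := y + z)
        (by linarith) (_root_.intervalIntegrable_const (μ := MeasureTheory.volume) (c := c))
        (hfc.intervalIntegrable z (y + z)) (fun u _ => hflb u)
      rw [intervalIntegral.integral_const, smul_eq_mul] at hmono
      calc c * y = (y + z - z) * c := by ring
        _ ≤ _ := hmono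
    have hexp : Real.exp (-(∫ u in z..(y + z), 2 * μ u / (σ u) ^ 2))
        ≤ Real.exp (-(c * y)) := Real.exp_le_exp.2 (neg_le_neg hinner)
    exact mul_le_mul (hfub (y + z)) hexp (Real.exp_pos _).le hC.le
  have hmaj : IntegrableOn (fun y => C * Real.exp (-(c * y))) (Set.Ioi a) := by
    rw [IntegrableOn]
    simpa [neg_mul] using (exp_neg_integrableOn_Ioi a hc).const_mul C
  have hle : (∫ y in Set.Ioi a, g y) ≤ ∫ y in Set.Ioi a, C * Real.exp (-(c * y)) :=
    integral_mono_of_nonneg (Filter.Eventually.of_forall fun y => hgnn y) hmaj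
      (ae_restrict_of_forall_mem measurableSet_Ioi hgub)
  have hInn : 0 ≤ ∫ y in Set.Ioi a, g y :=
    setIntegral_nonneg measurableSet_Ioi fun y _ => hgnn y
  have hIval : (∫ y in Set.Ioi a, C * Real.exp (-(c * y))) = C / c * Real.exp (-(c * a)) := by
    rw [MeasureTheory.integral_const_mul, aux_integral_exp a hc]
    ring
  have hIbound : |∫ y in Set.Ioi a, g y| ≤ C / c * Real.exp (-(c * a)) := by
    rw [abs_of_nonneg hInn]
    exact hle.trans_eq hIval
  -- numerator bound
  have hnum : |h z - αstar| ≤ b₁ + |αstar| + |b₂| * (a + |z₀|) ^ n := by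
    have h1 : |h z - αstar| ≤ |h z| + |αstar| := abs_sub _ _
    have h2 : |h z| ≤ b₁ + b₂ * |z| ^ n := hb z
    have h3 : b₂ * |z| ^ n ≤ |b₂| * (a + |z₀|) ^ n := by
      have hzabs : |z| ≤ a + |z₀| := by
        have : |z| = |z₀ - a| := by rw [hadef]; ring_nf
        rw [this]
        calc |z₀ - a| ≤ |z₀| + |a| := abs_sub _ _
          _ = |z₀| + a := by rw [abs_of_pos ha]
          _ = a + |z₀| := by ring
      exact mul_le_mul (le_abs_self b₂) (pow_le_pow_left₀ (abs_nonneg z) hzabs n)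
        (pow_nonneg (abs_nonneg z) n) (abs_nonneg b₂)
    linarith
  have hnumnn : 0 ≤ b₁ + |αstar| + |b₂| * (a + |z₀|) ^ n :=
    (abs_nonneg _).trans hnum
  have hfrac : |(h z - αstar) / μ z| ≤ (b₁ + |αstar| + |b₂| * (a + |z₀|) ^ n) / μlo := by
    rw [abs_div]
    exact div_le_div₀ hnumnn hnum hμlo (((hμ z).1).trans (le_abs_self _))
  calc ‖(h z - αstar) / μ z * ∫ y in Set.Ioi a, g y‖
      = |(h z - αstar) / μ z| * |∫ y in Set.Ioi a, g y| := by
        rw [Real.norm_eq_abs, abs_mul]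
    _ ≤ ((b₁ + |αstar| + |b₂| * (a + |z₀|) ^ n) / μlo) *
          (C / c * Real.exp (-(c * a))) := by
        exact mul_le_mul hfrac hIbound (abs_nonneg _)
          (div_nonneg hnumnn hμlo.le)
    _ = B z := rfl
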